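/- For a connected graph Γ with n ≥ 2 vertices, the smallest distance eigenvalue equals -2 if and only if Γ is a complete multipartite graph K_{a_1,...,a_s} with some part of size at least 2; in that case the multiplicity of -2 equals n - s. -/

import Mathlib

open SimpleGraph Matrix Finset

/-- The distance matrix of a graph, with real entries. -/
noncomputable def distMatrix {V : Type*} [Fintype V] (G : SimpleGraph V) : Matrix V V ℝ :=
  Matrix.of fun x y => (G.dist x y : ℝ)

lemma distMatrix_isHermitian {V : Type*} [Fintype V] (G : SimpleGraph V) :
    (distMatrix G).IsHermitian := by
  ext x y
  simp [distMatrix, Matrix.conjTranspose_apply, SimpleGraph.dist_comm]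

/-- The multiset of eigenvalues (with multiplicity) of the distance matrix of `G`. -/
noncomputable def distSpec {V : Type*} [Fintype V] [DecidableEq V] (G : SimpleGraph V) :
    Multiset ℝ :=
  Finset.univ.val.map (distMatrix_isHermitian G).eigenvalues

section Aux

variable {V : Type*} [Fintype V] [DecidableEq V] (G : SimpleGraph V)

/-- the shifted distance matrix D + 2I -/
noncomputable abbrev shiftM : Matrix V V ℝ := distMatrix G + (2 : ℝ) • 1

lemma shiftM_isHermitian : (shiftM G).IsHermitian := by
  refine (distMatrix_isHermitian G).add ?_
  simp [Matrix.IsHermitian, Matrix.conjTranspose_smul]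

/-- spectral decomposition of the shifted matrix -/
lemma shiftM_eq_unitary :
    shiftM G = ((distMatrix_isHermitian G).eigenvectorUnitary : Matrix V V ℝ) *
      Matrix.diagonal (fun i => (distMatrix_isHermitian G).eigenvalues i + 2) *
      (star ((distMatrix_isHermitian G).eigenvectorUnitary : Matrix V V ℝ)) := by
  set hA := distMatrix_isHermitian G
  set U := (hA.eigenvectorUnitary : Matrix V V ℝ) with hU
  have hUU : U * star U = 1 := (Matrix.mem_unitaryGroup_iff).mp hA.eigenvectorUnitary.2
  have h1 : Matrix.diagonal (fun i => hA.eigenvalues i + 2) =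
      Matrix.diagonal hA.eigenvalues + (2:ℝ) • 1 := by
    ext i j
    by_cases h : i = j <;> simp [Matrix.diagonal_apply, Matrix.one_apply, h]
  have h2 : distMatrix G = U * Matrix.diagonal hA.eigenvalues * star U := by
    have h3 : (RCLike.ofReal ∘ hA.eigenvalues : V → ℝ) = hA.eigenvalues := by
      funext i; simp [RCLike.ofReal]
    have := hA.spectral_theorem
    rwa [h3] at this
  rw [shiftM, h1, mul_add, add_mul, Matrix.mul_smul, Matrix.smul_mul, mul_one, hUU, ← h2]

lemma shiftM_rank :
    (shiftM G).rank =
      Fintype.card {i // (distMatrix_isHermitian G).eigenvalues i + 2 ≠ 0} := by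
  set hA := distMatrix_isHermitian G
  set U := (hA.eigenvectorUnitary : Matrix V V ℝ) with hU
  have hUU : U * star U = 1 := (Matrix.mem_unitaryGroup_iff).mp hA.eigenvectorUnitary.2
  have hUU' : star U * U = 1 := (Matrix.mem_unitaryGroup_iff').mp hA.eigenvectorUnitary.2
  have hdU : IsUnit U.det :=
    IsUnit.of_mul_eq_one _ (by rw [← Matrix.det_mul, hUU, Matrix.det_one])
  have hdU' : IsUnit (star U).det :=
    IsUnit.of_mul_eq_one _ (by rw [← Matrix.det_mul, hUU', Matrix.det_one])
  rw [shiftM_eq_unitary, ← hU, Matrix.rank_mul_eq_left_of_isUnit_det _ _ hdU',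
    Matrix.rank_mul_eq_right_of_isUnit_det _ _ hdU, Matrix.rank_diagonal]

lemma count_neg_two :
    (distSpec G).count (-2) = Fintype.card V - (shiftM G).rank := by
  set hA := distMatrix_isHermitian G
  rw [shiftM_rank, distSpec, Multiset.count_map]
  have h1 : (Multiset.filter (fun a => (-2:ℝ) = hA.eigenvalues a) Finset.univ.val).card
      = (Finset.univ.filter (fun a => hA.eigenvalues a = -2)).card := by
    congr 1
    simp only [Finset.filter_val]
    congr 1
    funext a
    simp [eq_comm]
  rw [h1]
  have h2 : Fintype.card {i // hA.eigenvalues i + 2 ≠ 0}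
      = (Finset.univ.filter (fun a => ¬ hA.eigenvalues a = -2)).card := by
    rw [Fintype.card_subtype]
    congr 1
    apply Finset.filter_congr
    intro i _
    constructor
    · intro h h'; apply h; rw [h']; ring
    · intro h h'; apply h; linarith
  rw [h2]
  have := Finset.card_filter_add_card_filter_not
    (s := (Finset.univ : Finset V)) (p := fun a => hA.eigenvalues a = -2)
  have hcu : (Finset.univ : Finset V).card = Fintype.card V := Finset.card_univ
  omega

/-- eigenvalues bounded below when shifted matrix is PSD -/
lemma eig_ge_of_psd (h : (shiftM G).PosSemidef) : ∀ μ ∈ distSpec G, (-2:ℝ) ≤ μ := by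
  intro μ hμ
  set hA := distMatrix_isHermitian G
  obtain ⟨i, _, rfl⟩ := Multiset.mem_map.mp hμ
  set v : V → ℝ := ⇑(hA.eigenvectorBasis i) with hv
  have hv0 : v ≠ 0 := by
    intro h0
    exact hA.eigenvectorBasis.orthonormal.ne_zero i (by ext j; exact congrFun h0 j)
  have hmul : shiftM G *ᵥ v = (hA.eigenvalues i + 2) • v := by
    rw [shiftM, Matrix.add_mulVec, hA.mulVec_eigenvectorBasis, Matrix.smul_mulVec,
      Matrix.one_mulVec, add_smul]
  have hq := h.dotProduct_mulVec_nonneg v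
  rw [hmul] at hq
  have hvv : 0 < v ⬝ᵥ v := by
    have h0 : 0 ≤ v ⬝ᵥ v := Finset.sum_nonneg fun j _ => mul_self_nonneg _
    have hne : v ⬝ᵥ v ≠ 0 := fun h' => hv0 (dotProduct_self_eq_zero.mp h')
    exact h0.lt_of_ne (Ne.symm hne)
  have : (0:ℝ) ≤ (hA.eigenvalues i + 2) * (v ⬝ᵥ v) := by
    simpa [dotProduct_smul] using hq
  nlinarith

/-- shifted matrix is PSD when eigenvalues bounded below -/
lemma psd_of_eig_ge (h : ∀ μ ∈ distSpec G, (-2:ℝ) ≤ μ) : (shiftM G).PosSemidef := by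
  set hA := distMatrix_isHermitian G
  have hd : Matrix.PosSemidef
      (Matrix.diagonal (fun i => hA.eigenvalues i + 2) : Matrix V V ℝ) := by
    refine Matrix.PosSemidef.diagonal fun i => ?_
    have hm : hA.eigenvalues i ∈ distSpec G :=
      Multiset.mem_map_of_mem _ (Finset.mem_univ_val _)
    have := h _ hm
    show (0:ℝ) ≤ _
    linarith
  have := hd.mul_mul_conjTranspose_same (hA.eigenvectorUnitary : Matrix V V ℝ)
  rw [shiftM_eq_unitary]
  simpa [Matrix.star_eq_conjTranspose] using this

end Aux

set_option linter.unusedSectionVars false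

section Coloring

variable {V Q : Type*} [Fintype V] [DecidableEq V] [Fintype Q] [DecidableEq Q]
  (G : SimpleGraph V) (hconn : G.Connected) (hn : 2 ≤ Fintype.card V)
  (c : V → Q) (hsurj : Function.Surjective c)
  (hadj : ∀ x y, G.Adj x y ↔ c x ≠ c y)

include hconn hn hsurj hadj

lemma dist_of_coloring (x y : V) :
    G.dist x y = if x = y then 0 else if c x = c y then 2 else 1 := by
  split_ifs with h1 h2
  · subst h1; exact SimpleGraph.dist_self
  · have hnadj : ¬ G.Adj x y := fun h => (hadj x y).mp h h2
    obtain ⟨y', hy'⟩ := Fintype.exists_ne_of_one_lt_card (by omega) x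
    obtain ⟨w⟩ := hconn.preconnected x y'
    have hz : G.Adj x (w.getVert 1) :=
      SimpleGraph.Walk.adj_snd (SimpleGraph.Walk.not_nil_of_ne (Ne.symm hy'))
    set z := w.getVert 1 with hzdef
    have hcz : c x ≠ c z := (hadj x z).mp hz
    have hzy : G.Adj z y := (hadj z y).mpr (by rw [← h2]; exact fun h => hcz h.symm)
    have hle : G.dist x y ≤ 2 := by
      have := SimpleGraph.dist_le
        (SimpleGraph.Walk.cons hz (SimpleGraph.Walk.cons hzy SimpleGraph.Walk.nil))
      simpa using this
    have h0 : G.dist x y ≠ 0 := fun h => h1 (hconn.dist_eq_zero_iff.mp h)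
    have h1' : G.dist x y ≠ 1 := fun h => hnadj (SimpleGraph.dist_eq_one_iff_adj.mp h)
    omega
  · exact SimpleGraph.dist_eq_one_iff_adj.mpr ((hadj x y).mpr h2)

lemma shiftM_of_coloring :
    shiftM G = Matrix.of fun x y => (if c x = c y then (1:ℝ) else 0) + 1 := by
  ext x y
  have hd := dist_of_coloring G hconn hn c hsurj hadj x y
  simp only [shiftM, Matrix.add_apply, Matrix.smul_apply, Matrix.one_apply, distMatrix,
    Matrix.of_apply, smul_eq_mul]
  rcases eq_or_ne x y with h | h
  · subst h; simp [hd]; norm_num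
  · by_cases h2 : c x = c y <;> simp [hd, h, h2] <;> norm_num

lemma mulVec_coloring (x : V → ℝ) (u : V) :
    (shiftM G *ᵥ x) u =
      (∑ v ∈ Finset.univ.filter (fun v => c v = c u), x v) + ∑ v, x v := by
  rw [shiftM_of_coloring G hconn hn c hsurj hadj]
  simp only [Matrix.mulVec, dotProduct, Matrix.of_apply, add_mul, one_mul]
  rw [Finset.sum_add_distrib]
  congr 1
  rw [Finset.sum_filter]
  apply Finset.sum_congr rfl
  intro v _
  by_cases h : c v = c u
  · simp [h]
  · simp only [if_neg h]
    rw [if_neg (fun h' => h h'.symm), zero_mul]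

lemma quadform_coloring (x : V → ℝ) :
    x ⬝ᵥ (shiftM G *ᵥ x) =
      (∑ q, (∑ v ∈ Finset.univ.filter (fun v => c v = q), x v)^2) + (∑ v, x v)^2 := by
  unfold dotProduct
  have h1 : ∀ u, x u * (shiftM G *ᵥ x) u =
      x u * (∑ v ∈ Finset.univ.filter (fun v => c v = c u), x v) + x u * (∑ v, x v) := by
    intro u
    rw [mulVec_coloring G hconn hn c hsurj hadj, mul_add]
  simp only [h1]
  rw [Finset.sum_add_distrib, ← Finset.sum_mul]
  congr 1
  · rw [← Finset.sum_fiberwise (Finset.univ : Finset V) c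
      (fun u => x u * (∑ v ∈ Finset.univ.filter (fun v => c v = c u), x v))]
    apply Finset.sum_congr rfl
    intro q _
    have heq : ∀ u ∈ Finset.univ.filter (fun v => c v = q),
        x u * (∑ v ∈ Finset.univ.filter (fun v => c v = c u), x v)
        = x u * (∑ v ∈ Finset.univ.filter (fun v => c v = q), x v) := by
      intro u hu
      rw [Finset.mem_filter] at hu
      rw [hu.2]
    rw [Finset.sum_congr rfl heq, ← Finset.sum_mul, sq]
  · rw [sq]

lemma shiftM_posSemidef_of_coloring : (shiftM G).PosSemidef := by
  refine Matrix.PosSemidef.of_dotProduct_mulVec_nonneg (shiftM_isHermitian G) fun x => ?_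
  have : star x = x := by simp
  rw [this, quadform_coloring G hconn hn c hsurj hadj]
  positivity

lemma shiftM_rank_of_coloring : (shiftM G).rank = Fintype.card Q := by
  set P : Matrix Q V ℝ := Matrix.of fun q v => if c v = q then 1 else 0 with hP
  have hPx : ∀ (x : V → ℝ) q, (P *ᵥ x) q = ∑ v ∈ Finset.univ.filter (fun v => c v = q), x v := by
    intro x q
    simp only [Matrix.mulVec, dotProduct, hP, Matrix.of_apply]
    rw [Finset.sum_filter]
    apply Finset.sum_congr rfl
    intro v _
    by_cases h : c v = q <;> simp [h]
  have hT : ∀ x : V → ℝ, ∑ q, (P *ᵥ x) q = ∑ v, x v := by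
    intro x
    simp only [hPx]
    exact Finset.sum_fiberwise _ _ _
  have hker : LinearMap.ker (shiftM G).mulVecLin = LinearMap.ker P.mulVecLin := by
    ext x
    simp only [LinearMap.mem_ker, Matrix.mulVecLin_apply]
    constructor
    · intro h
      have h' : ∀ u, (P *ᵥ x) (c u) + (∑ v, x v) = 0 := by
        intro u
        have := congrFun h u
        rw [mulVec_coloring G hconn hn c hsurj hadj, ← hPx] at this
        exact this
      have hq : ∀ q, (P *ᵥ x) q = -(∑ v, x v) := by
        intro q
        obtain ⟨u, rfl⟩ := hsurj q
        linarith [h' u]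
      have hTT : (∑ v, x v) = - ((Fintype.card Q : ℝ) * (∑ v, x v)) := by
        conv_lhs => rw [← hT x]
        rw [Finset.sum_congr rfl (fun q _ => hq q), Finset.sum_const, nsmul_eq_mul]
        rw [Finset.card_univ]
        ring
      have hT0 : (∑ v, x v) = 0 := by
        have hc : (0:ℝ) ≤ (Fintype.card Q : ℝ) := Nat.cast_nonneg _
        nlinarith [hTT]
      funext q
      rw [hq q, hT0]
      simp
    · intro h
      have hq : ∀ q, (P *ᵥ x) q = 0 := fun q => congrFun h q
      have hT0 : (∑ v, x v) = 0 := by rw [← hT x]; simp [hq]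
      funext u
      rw [mulVec_coloring G hconn hn c hsurj hadj, ← hPx, hq, hT0]
      simp
  have hsurjP : Function.Surjective P.mulVecLin := by
    intro y
    refine ⟨fun v => y (c v) / (Finset.univ.filter (fun w => c w = c v)).card, ?_⟩
    rw [Matrix.mulVecLin_apply]
    funext q
    rw [hPx]
    obtain ⟨v₀, hv₀⟩ := hsurj q
    have hne : (Finset.univ.filter (fun w => c w = q)).Nonempty :=
      ⟨v₀, by simp [hv₀]⟩
    have hn0 : (0:ℝ) < ((Finset.univ.filter (fun w => c w = q)).card : ℝ) := by
      exact_mod_cast Finset.card_pos.mpr hne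
    have heq : ∀ v ∈ Finset.univ.filter (fun w => c w = q),
        y (c v) / ((Finset.univ.filter (fun w => c w = c v)).card : ℝ)
        = y q / ((Finset.univ.filter (fun w => c w = q)).card : ℝ) := by
      intro v hv
      rw [Finset.mem_filter] at hv
      rw [hv.2]
    rw [Finset.sum_congr rfl heq, Finset.sum_const, nsmul_eq_mul]
    field_simp
  have h1 := LinearMap.finrank_range_add_finrank_ker (shiftM G).mulVecLin
  have h2 := LinearMap.finrank_range_add_finrank_ker P.mulVecLin
  rw [LinearMap.range_eq_top.mpr hsurjP, finrank_top] at h2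
  rw [hker] at h1
  have hV : Module.finrank ℝ (V → ℝ) = Fintype.card V := Module.finrank_pi ℝ
  have hQ : Module.finrank ℝ (Q → ℝ) = Fintype.card Q := Module.finrank_pi ℝ
  have hrk : (shiftM G).rank = Module.finrank ℝ (LinearMap.range (shiftM G).mulVecLin) := rfl
  omega

lemma count_of_coloring :
    (distSpec G).count (-2) = Fintype.card V - Fintype.card Q := by
  rw [count_neg_two, shiftM_rank_of_coloring G hconn hn c hsurj hadj]

lemma mem_of_coloring (hlt : Fintype.card Q < Fintype.card V) :
    (-2 : ℝ) ∈ distSpec G := by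
  rw [← Multiset.count_pos, count_of_coloring G hconn hn c hsurj hadj]
  omega

end Coloring


lemma coloring_to_iso {V Q : Type*} [Fintype V] [DecidableEq V] [Fintype Q] [DecidableEq Q]
    (G : SimpleGraph V) (c : V → Q) (hsurj : Function.Surjective c)
    (hadj : ∀ x y, G.Adj x y ↔ c x ≠ c y) :
    ∃ (a : Fin (Fintype.card Q) → ℕ), (∀ i, 0 < a i) ∧
      Nonempty (G ≃g completeMultipartiteGraph fun i => Fin (a i)) := by
  set d : Q ≃ Fin (Fintype.card Q) := Fintype.equivFin Q with hd
  set c' : V → Fin (Fintype.card Q) := fun v => d (c v) with hc'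
  refine ⟨fun i => Fintype.card {v // c' v = i}, ?_, ?_⟩
  · intro i
    rw [Fintype.card_pos_iff]
    obtain ⟨v, hv⟩ := hsurj (d.symm i)
    exact ⟨⟨v, by simp [hc', hv]⟩⟩
  · refine ⟨⟨(Equiv.sigmaFiberEquiv c').symm.trans
      (Equiv.sigmaCongrRight fun i => Fintype.equivFin {v // c' v = i}), ?_⟩⟩
    intro u v
    have hfst : ∀ w : V, (((Equiv.sigmaFiberEquiv c').symm.trans
        (Equiv.sigmaCongrRight fun i => Fintype.equivFin {v // c' v = i})) w).1 = c' w := by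
      intro w
      rfl
    show (completeMultipartiteGraph _).Adj _ _ ↔ G.Adj u v
    rw [hadj]
    simp only [SimpleGraph.comap_adj, SimpleGraph.top_adj, hfst]
    constructor
    · intro h hc; exact h (by rw [hc'] ; simp [hc])
    · intro h hc; exact h (d.injective hc)


lemma quad_eval {V : Type*} [Fintype V] [DecidableEq V] (M : Matrix V V ℝ) (x y z : V)
    (a b d : ℝ) :
    (Pi.single x a + Pi.single y b + Pi.single z d) ⬝ᵥ
      (M *ᵥ (Pi.single x a + Pi.single y b + Pi.single z d)) =
    a*(M x x*a + M x y*b + M x z*d) + b*(M y x*a + M y y*b + M y z*d)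
      + d*(M z x*a + M z y*b + M z z*d) := by
  simp only [Matrix.mulVec_add, dotProduct_add, add_dotProduct,
    Matrix.mulVec_single, single_dotProduct, Pi.add_apply, Pi.smul_apply, Matrix.col_apply,
    MulOpposite.smul_eq_mul_unop, MulOpposite.unop_op]
  ring

theorem dcube_stmt2 {V : Type*} [Fintype V] [DecidableEq V] (G : SimpleGraph V)
    (hn : 2 ≤ Fintype.card V) (hconn : G.Connected) (δmin : ℝ)
    (hmem : δmin ∈ distSpec G) (hmin : ∀ μ ∈ distSpec G, δmin ≤ μ) :
    δmin = -2 ↔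
      ∃ (s : ℕ) (a : Fin s → ℕ), (∀ i, 0 < a i) ∧ (∃ i, 2 ≤ a i) ∧
        Nonempty (G ≃g completeMultipartiteGraph fun i => Fin (a i)) ∧
        (distSpec G).count (-2) = Fintype.card V - s := by
  have hNe : ∀ u v : V, shiftM G u v = (G.dist u v : ℝ) + (if u = v then 2 else 0) := by
    intro u v
    simp [shiftM, Matrix.one_apply, distMatrix, mul_ite]
  constructor
  · intro hδ
    have hge : ∀ μ ∈ distSpec G, (-2:ℝ) ≤ μ := fun μ hμ => hδ ▸ hmin μ hμ
    have hpsd := psd_of_eig_ge G hge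
    have htrans : ∀ x y z : V, ¬ G.Adj x y → ¬ G.Adj y z → ¬ G.Adj x z := by
      intro x y z hxy hyz hxz
      rcases eq_or_ne y x with rfl | hyx
      · exact hyz hxz
      rcases eq_or_ne y z with rfl | hyz'
      · exact hxy hxz
      have hd1 : 2 ≤ G.dist x y := by
        have h0 : G.dist x y ≠ 0 := fun h => hyx (hconn.dist_eq_zero_iff.mp h).symm
        have h1 : G.dist x y ≠ 1 := fun h => hxy (SimpleGraph.dist_eq_one_iff_adj.mp h)
        omega
      have hd2 : 2 ≤ G.dist y z := by
        have h0 : G.dist y z ≠ 0 := fun h => hyz' (hconn.dist_eq_zero_iff.mp h)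
        have h1 : G.dist y z ≠ 1 := fun h => hyz (SimpleGraph.dist_eq_one_iff_adj.mp h)
        omega
      set d1 : ℝ := (G.dist x y : ℝ) with hd1'
      set d2 : ℝ := (G.dist y z : ℝ) with hd2'
      have hd1r : 2 ≤ d1 := by rw [hd1']; exact_mod_cast hd1
      have hd2r : 2 ≤ d2 := by rw [hd2']; exact_mod_cast hd2
      set t : ℝ := (d1 + d2)/2 with ht'
      have ht : 2 ≤ t := by rw [ht']; linarith
      set w : V → ℝ := Pi.single x 1 + Pi.single z 1 + Pi.single y (-t) with hw
      have hq := hpsd.dotProduct_mulVec_nonneg w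
      have hstar : star w = w := by
        funext u
        simp
      rw [hstar, hw, quad_eval] at hq
      have hxz' : x ≠ z := G.ne_of_adj hxz
      have e1 : shiftM G x x = 2 := by rw [hNe]; simp
      have e2 : shiftM G z z = 2 := by rw [hNe]; simp
      have e3 : shiftM G y y = 2 := by rw [hNe]; simp
      have exz : shiftM G x z = 1 := by
        rw [hNe, if_neg hxz', SimpleGraph.dist_eq_one_iff_adj.mpr hxz]
        norm_num
      have ezx : shiftM G z x = 1 := by
        rw [hNe, if_neg (Ne.symm hxz'), SimpleGraph.dist_eq_one_iff_adj.mpr hxz.symm]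
        norm_num
      have exy : shiftM G x y = d1 := by
        rw [hNe, if_neg (Ne.symm hyx), hd1']
        simp
      have eyx : shiftM G y x = d1 := by
        rw [hNe, if_neg hyx, hd1', SimpleGraph.dist_comm]
        simp
      have eyz : shiftM G y z = d2 := by
        rw [hNe, if_neg hyz', hd2']
        simp
      have ezy : shiftM G z y = d2 := by
        rw [hNe, if_neg (Ne.symm hyz'), hd2', SimpleGraph.dist_comm]
        simp
      rw [e1, e2, e3, exz, ezx, exy, eyx, eyz, ezy] at hq
      nlinarith [hq, ht]
    let st : Setoid V := ⟨fun x y => ¬ G.Adj x y,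
      ⟨fun x => G.loopless.irrefl x, fun h ha => h ha.symm, fun h1 h2 => htrans _ _ _ h1 h2⟩⟩
    haveI : DecidableRel st.r := Classical.decRel _
    let Qt := Quotient st
    haveI : DecidableEq Qt := Classical.decEq _
    let c : V → Qt := Quotient.mk st
    have hsurj : Function.Surjective c := Quotient.mk_surjective
    have hadjc : ∀ x y, G.Adj x y ↔ c x ≠ c y := by
      intro x y
      constructor
      · intro h hc
        exact Quotient.eq.mp hc h
      · intro h
        by_contra hna
        exact h (Quotient.sound hna)
    obtain ⟨a, hpos, ⟨e⟩⟩ := coloring_to_iso G c hsurj hadjc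
    have hcount := count_of_coloring G hconn hn c hsurj hadjc
    have hmem2 : (-2:ℝ) ∈ distSpec G := hδ ▸ hmem
    have hpos2 : 0 < (distSpec G).count (-2) := Multiset.count_pos.mpr hmem2
    have hlt : Fintype.card Qt < Fintype.card V := by omega
    have hcardV : Fintype.card V = ∑ i, a i := by
      rw [Fintype.card_congr e.toEquiv, Fintype.card_sigma]
      simp
    refine ⟨Fintype.card Qt, a, hpos, ?_, ⟨e⟩, by omega⟩
    by_contra hno
    push_neg at hno
    have : ∑ i, a i ≤ ∑ _i : Fin (Fintype.card Qt), 1 :=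
      Finset.sum_le_sum fun i _ => by have := hno i; omega
    simp at this
    omega
  · rintro ⟨s, a, hpos, ⟨i₀, hi₀⟩, ⟨e⟩, hcount⟩
    let c : V → Fin s := fun v => (e v).1
    have hadjc : ∀ x y, G.Adj x y ↔ c x ≠ c y := by
      intro x y
      rw [← e.map_rel_iff]
      simp only [SimpleGraph.comap_adj, SimpleGraph.top_adj]
      exact Iff.rfl
    have hsurj : Function.Surjective c := by
      intro i
      refine ⟨e.symm ⟨i, ⟨0, hpos i⟩⟩, ?_⟩
      show (e (e.symm _)).1 = i
      rw [RelIso.apply_symm_apply]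
    have hcardV : Fintype.card V = ∑ i, a i := by
      rw [Fintype.card_congr e.toEquiv, Fintype.card_sigma]
      simp
    have hlt : Fintype.card (Fin s) < Fintype.card V := by
      rw [Fintype.card_fin, hcardV]
      calc s = ∑ _i : Fin s, 1 := by simp
      _ < ∑ i, a i := Finset.sum_lt_sum (fun i _ => hpos i) ⟨i₀, Finset.mem_univ _, by omega⟩
    have hmem2 := mem_of_coloring G hconn hn c hsurj hadjc hlt
    have hge := eig_ge_of_psd G (shiftM_posSemidef_of_coloring G hconn hn c hsurj hadjc)
    have h1 := hmin _ hmem2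
    have h2 := hge _ hmem
    linarith
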